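/- Let w, c be real numbers with c > 0 and 0 < w < c + 1, and let A = [[w-1, -c],[w, -c]]. Then the symmetric matrix P = (1/(2c(1+c-w))) · [[c + c^2 + w^2, -c^2 + w - w^2],[-c^2 + w - w^2, 1 + c + c^2 - 2w + w^2]] satisfies the Lyapunov equation P A + Aᵀ P = -I. -/

import Mathlib

set_option maxHeartbeats 1000000


open Matrix

theorem stmt1 (w c : ℝ) (hc : 0 < c) (hw0 : 0 < w) (hw1 : w < c + 1) :
    let A : Matrix (Fin 2) (Fin 2) ℝ := !![w - 1, -c; w, -c]
    let P : Matrix (Fin 2) (Fin 2) ℝ :=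
      (1 / (2 * c * (1 + c - w))) •
        !![c + c ^ 2 + w ^ 2, -c ^ 2 + w - w ^ 2;
           -c ^ 2 + w - w ^ 2, 1 + c + c ^ 2 - 2 * w + w ^ 2]
    P.IsSymm ∧ P * A + Aᵀ * P = -1 := by
  intro A P
  have hd : 2 * c * (1 + c - w) ≠ 0 := by
    have : 0 < 1 + c - w := by linarith
    positivity
  have hAT : Aᵀ = !![w - 1, w; -c, -c] := by
    ext i j
    fin_cases i <;> fin_cases j <;> rfl
  have hd2 : (1 + c - w) * (c * 2) ≠ 0 := by
    rw [show (1 + c - w) * (c * 2) = 2 * c * (1 + c - w) by ring]; exact hd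
  constructor
  · unfold P
    rw [Matrix.IsSymm]
    ext i j
    fin_cases i <;> fin_cases j <;> simp [Matrix.transpose_apply]
  · rw [hAT]
    unfold P A
    ext i j
    fin_cases i <;> fin_cases j <;>
      simp [Matrix.mul_apply, Fin.sum_univ_two, Matrix.smul_apply,
        Matrix.one_apply] <;>
      field_simp [(show (0:ℝ) < 1 + c - w by linarith).ne'] <;> ring
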